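/- Any reciprocal orthogonality on C stabilises the monoidal product: for all subsets U ⊆ C(I,R) and V ⊆ C(I,S), the three orthogonals coincide: (U°° ⊗ V°°)° = (U°° ⊗ V)° = (U ⊗ V°°)°. -/

import Mathlib

open CategoryTheory MonoidalCategory

/-- The orthogonal of a set of points `U ⊆ C(I,R)`: the copoints orthogonal to every member. -/
def ptOrth {C : Type*} [Category C] [MonoidalCategory C] {J : C}
    (perp : ∀ R : C, (𝟙_ C ⟶ R) → (R ⟶ J) → Prop) (R : C)
    (U : Set (𝟙_ C ⟶ R)) : Set (R ⟶ J) :=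
  {x | ∀ u ∈ U, perp R u x}

/-- The orthogonal of a set of copoints `V ⊆ C(R,J)`: the points orthogonal to every member. -/
def cpOrth {C : Type*} [Category C] [MonoidalCategory C] {J : C}
    (perp : ∀ R : C, (𝟙_ C ⟶ R) → (R ⟶ J) → Prop) (R : C)
    (V : Set (R ⟶ J)) : Set (𝟙_ C ⟶ R) :=
  {u | ∀ x ∈ V, perp R u x}

/-- Double orthogonal (closure) of a set of points. -/
def ddOrth {C : Type*} [Category C] [MonoidalCategory C] {J : C}
    (perp : ∀ R : C, (𝟙_ C ⟶ R) → (R ⟶ J) → Prop) (R : C)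
    (U : Set (𝟙_ C ⟶ R)) : Set (𝟙_ C ⟶ R) :=
  cpOrth perp R (ptOrth perp R U)

/-- The tensor of two sets of points: `U ⊗ V := { (u ⊗ v) ∘ λ_I⁻¹ | u ∈ U, v ∈ V }`. -/
def tensSet {C : Type*} [Category C] [MonoidalCategory C]
    {R S : C} (U : Set (𝟙_ C ⟶ R)) (V : Set (𝟙_ C ⟶ S)) :
    Set (𝟙_ C ⟶ R ⊗ S) :=
  {w | ∃ u ∈ U, ∃ v ∈ V, w = (λ_ (𝟙_ C)).inv ≫ (u ⊗ₘ v)}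

lemma factorL {C : Type*} [Category C] [MonoidalCategory C] {R S : C}
    (u : 𝟙_ C ⟶ R) (v : 𝟙_ C ⟶ S) :
    (λ_ (𝟙_ C)).inv ≫ (u ⊗ₘ v) = v ≫ ((λ_ S).inv ≫ (u ⊗ₘ 𝟙 S)) := by
  rw [show u ⊗ₘ v = (𝟙 (𝟙_ C) ⊗ₘ v) ≫ (u ⊗ₘ 𝟙 S) by rw [tensorHom_comp_tensorHom]; simp]
  rw [← Category.assoc, ← Category.assoc]
  congr 1
  rw [id_tensorHom, ← leftUnitor_inv_naturality]

lemma factorR {C : Type*} [Category C] [MonoidalCategory C] {R S : C}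
    (u : 𝟙_ C ⟶ R) (v : 𝟙_ C ⟶ S) :
    (λ_ (𝟙_ C)).inv ≫ (u ⊗ₘ v) = u ≫ ((ρ_ R).inv ≫ (𝟙 R ⊗ₘ v)) := by
  rw [show u ⊗ₘ v = (u ⊗ₘ 𝟙 (𝟙_ C)) ≫ (𝟙 R ⊗ₘ v) by rw [tensorHom_comp_tensorHom]; simp]
  rw [← Category.assoc, ← Category.assoc]
  congr 1
  rw [unitors_inv_equal, tensorHom_id, ← rightUnitor_inv_naturality]

lemma self_subset_ddOrth {C : Type*} [Category C] [MonoidalCategory C] {J : C}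
    (perp : ∀ R : C, (𝟙_ C ⟶ R) → (R ⟶ J) → Prop) (R : C)
    (U : Set (𝟙_ C ⟶ R)) : U ⊆ ddOrth perp R U :=
  fun u hu _x hx => hx u hu

lemma subV {C : Type*} [Category C] [MonoidalCategory C] {J : C}
    (perp : ∀ R : C, (𝟙_ C ⟶ R) → (R ⟶ J) → Prop)
    (recip : ∀ (R S : C) (u : 𝟙_ C ⟶ R) (x : S ⟶ J) (f : R ⟶ S),
      perp R u (f ≫ x) ↔ perp S (u ≫ f) x)
    (R S : C) (U' : Set (𝟙_ C ⟶ R)) (V : Set (𝟙_ C ⟶ S)) :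
    ptOrth perp (R ⊗ S) (tensSet U' (ddOrth perp S V)) =
      ptOrth perp (R ⊗ S) (tensSet U' V) := by
  ext x
  constructor
  · intro hx w hw
    obtain ⟨u, hu, v, hv, rfl⟩ := hw
    exact hx _ ⟨u, hu, v, self_subset_ddOrth perp S V hv, rfl⟩
  · intro hx w hw
    obtain ⟨u, hu, v, hv, rfl⟩ := hw
    rw [factorL, ← recip]
    refine hv _ (fun v' hv' => ?_)
    have := hx _ ⟨u, hu, v', hv', rfl⟩
    rwa [factorL, ← recip] at this

lemma subU {C : Type*} [Category C] [MonoidalCategory C] {J : C}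
    (perp : ∀ R : C, (𝟙_ C ⟶ R) → (R ⟶ J) → Prop)
    (recip : ∀ (R S : C) (u : 𝟙_ C ⟶ R) (x : S ⟶ J) (f : R ⟶ S),
      perp R u (f ≫ x) ↔ perp S (u ≫ f) x)
    (R S : C) (U : Set (𝟙_ C ⟶ R)) (V' : Set (𝟙_ C ⟶ S)) :
    ptOrth perp (R ⊗ S) (tensSet (ddOrth perp R U) V') =
      ptOrth perp (R ⊗ S) (tensSet U V') := by
  ext x
  constructor
  · intro hx w hw
    obtain ⟨u, hu, v, hv, rfl⟩ := hw
    exact hx _ ⟨u, self_subset_ddOrth perp R U hu, v, hv, rfl⟩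
  · intro hx w hw
    obtain ⟨u, hu, v, hv, rfl⟩ := hw
    rw [factorR, ← recip]
    refine hu _ (fun u' hu' => ?_)
    have := hx _ ⟨u', hu', v, hv, rfl⟩
    rwa [factorR, ← recip] at this

/-- any reciprocal orthogonality stabilises the monoidal product:
`(U°° ⊗ V°°)° = (U°° ⊗ V)° = (U ⊗ V°°)°`. -/
theorem reciprocal_orthogonality_stabilises_tensor
    {C : Type*} [Category C] [MonoidalCategory C] (J : C)
    (perp : ∀ R : C, (𝟙_ C ⟶ R) → (R ⟶ J) → Prop)
    (recip : ∀ (R S : C) (u : 𝟙_ C ⟶ R) (x : S ⟶ J) (f : R ⟶ S),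
      perp R u (f ≫ x) ↔ perp S (u ≫ f) x)
    (R S : C) (U : Set (𝟙_ C ⟶ R)) (V : Set (𝟙_ C ⟶ S)) :
    ptOrth perp (R ⊗ S) (tensSet (ddOrth perp R U) (ddOrth perp S V)) =
        ptOrth perp (R ⊗ S) (tensSet (ddOrth perp R U) V) ∧
      ptOrth perp (R ⊗ S) (tensSet (ddOrth perp R U) V) =
        ptOrth perp (R ⊗ S) (tensSet U (ddOrth perp S V)) := by
  exact ⟨subV perp recip R S _ V,
    by rw [subU perp recip R S U V, ← subV perp recip R S U V]⟩
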